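/- A set X ⊆ ℝ^d is Capra-convex if and only if its indicator function satisfies ι_X = ι_{cl conv(ρ(X))} ∘ ρ, where cl conv denotes closed convex hull and ρ the radial projection. -/

import Mathlib

open Classical in
noncomputable def radProj {d : ℕ} (N : EuclideanSpace ℝ (Fin d) → ℝ)
    (x : EuclideanSpace ℝ (Fin d)) : EuclideanSpace ℝ (Fin d) :=
  if x = 0 then 0 else (N x)⁻¹ • x

noncomputable def capraConj {d : ℕ} (N : EuclideanSpace ℝ (Fin d) → ℝ)
    (f : EuclideanSpace ℝ (Fin d) → EReal) (y : EuclideanSpace ℝ (Fin d)) : EReal :=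
  ⨆ x : EuclideanSpace ℝ (Fin d), ((inner ℝ (radProj N x) y : ℝ) : EReal) - f x

noncomputable def capraBiconj {d : ℕ} (N : EuclideanSpace ℝ (Fin d) → ℝ)
    (f : EuclideanSpace ℝ (Fin d) → EReal) (x : EuclideanSpace ℝ (Fin d)) : EReal :=
  ⨆ y : EuclideanSpace ℝ (Fin d), ((inner ℝ (radProj N x) y : ℝ) : EReal) - capraConj N f y

open Classical in
noncomputable def ind {d : ℕ} (X : Set (EuclideanSpace ℝ (Fin d)))
    (x : EuclideanSpace ℝ (Fin d)) : EReal :=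
  if x ∈ X then 0 else ⊤

def IsCapraConvex {d : ℕ} (N : EuclideanSpace ℝ (Fin d) → ℝ)
    (X : Set (EuclideanSpace ℝ (Fin d))) : Prop :=
  ind X = capraBiconj N (ind X)

def coneHull {d : ℕ} (A : Set (EuclideanSpace ℝ (Fin d))) : Set (EuclideanSpace ℝ (Fin d)) :=
  {y | ∃ a ∈ A, ∃ l : ℝ, 0 < l ∧ y = l • a}

private lemma key {d : ℕ} (g : EuclideanSpace ℝ (Fin d) → EuclideanSpace ℝ (Fin d))
    (X : Set (EuclideanSpace ℝ (Fin d))) (z : EuclideanSpace ℝ (Fin d)) :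
    (⨆ y : EuclideanSpace ℝ (Fin d), ((inner ℝ z y : ℝ) : EReal) -
      (⨆ x : EuclideanSpace ℝ (Fin d), ((inner ℝ (g x) y : ℝ) : EReal) - ind X x)) =
    ind (closure (convexHull ℝ (g '' X))) z := by
  set A : Set (EuclideanSpace ℝ (Fin d)) := g '' X with hA
  set C : Set (EuclideanSpace ℝ (Fin d)) := closure (convexHull ℝ A) with hC
  set σ : EuclideanSpace ℝ (Fin d) → EReal :=
    fun y => ⨆ x : EuclideanSpace ℝ (Fin d), ((inner ℝ (g x) y : ℝ) : EReal) - ind X x with hσ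
  change (⨆ y : EuclideanSpace ℝ (Fin d), ((inner ℝ z y : ℝ) : EReal) - σ y) = ind C z
  rcases X.eq_empty_or_nonempty with hX | ⟨x0, hx0⟩
  · subst hX
    have hσbot : ∀ y, σ y = ⊥ := by
      intro y
      simp only [hσ, ind, Set.mem_empty_iff_false, if_false, EReal.sub_top, iSup_bot]
    have hterm : ∀ y : EuclideanSpace ℝ (Fin d),
        ((inner ℝ z y : ℝ) : EReal) - σ y = ⊤ := by
      intro y; rw [hσbot, EReal.coe_sub_bot]
    rw [ind, if_neg (by simp [hC, hA])]
    simp only [hterm, iSup_const]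
  · have hsub : A ⊆ C := (subset_convexHull ℝ A).trans subset_closure
    have hσ_lb : ∀ y : EuclideanSpace ℝ (Fin d), ∀ x ∈ X,
        ((inner ℝ (g x) y : ℝ) : EReal) ≤ σ y := by
      intro y x hx
      have h1 : ((inner ℝ (g x) y : ℝ) : EReal) = ((inner ℝ (g x) y : ℝ) : EReal) - ind X x := by
        rw [ind, if_pos hx, sub_zero]
      exact le_trans (le_of_eq h1)
        (le_iSup (fun x => ((inner ℝ (g x) y : ℝ) : EReal) - ind X x) x)
    have hσ_ub : ∀ (y : EuclideanSpace ℝ (Fin d)) (c : ℝ),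
        (∀ a ∈ A, (inner ℝ a y : ℝ) ≤ c) → σ y ≤ (c : EReal) := by
      intro y c h
      refine iSup_le fun x => ?_
      by_cases hx : x ∈ X
      · rw [ind, if_pos hx, sub_zero, EReal.coe_le_coe_iff]
        exact h _ ⟨x, hx, rfl⟩
      · rw [ind, if_neg hx, EReal.sub_top]; exact bot_le
    by_cases hz : z ∈ C
    · rw [ind, if_pos hz]
      apply le_antisymm
      · refine iSup_le fun y => ?_
        by_cases hσt : σ y = ⊤
        · rw [hσt, EReal.sub_top]; exact bot_le
        · have hσb : σ y ≠ ⊥ := by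
            intro h
            have := hσ_lb y x0 hx0
            rw [h, le_bot_iff] at this
            exact (EReal.coe_ne_bot _) this
          have hc : σ y = (((σ y).toReal : ℝ) : EReal) := (EReal.coe_toReal hσt hσb).symm
          set c : ℝ := (σ y).toReal with hcdef
          have hAc : ∀ a ∈ A, (inner ℝ a y : ℝ) ≤ c := by
            intro a ha
            obtain ⟨x, hx, rfl⟩ := ha
            have := hσ_lb y x hx
            rw [hc, EReal.coe_le_coe_iff] at this
            exact this
          have hlin : IsLinearMap ℝ (fun w : EuclideanSpace ℝ (Fin d) => (inner ℝ w y : ℝ)) :=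
            ⟨fun a b => inner_add_left a b y, fun r x => real_inner_smul_left x y r⟩
          have hconv : Convex ℝ {w : EuclideanSpace ℝ (Fin d) | (inner ℝ w y : ℝ) ≤ c} :=
            convex_halfSpace_le hlin c
          have hcl : IsClosed {w : EuclideanSpace ℝ (Fin d) | (inner ℝ w y : ℝ) ≤ c} :=
            isClosed_le (Continuous.inner continuous_id continuous_const) continuous_const
          have hCz : (inner ℝ z y : ℝ) ≤ c :=
            closure_minimal (convexHull_min hAc hconv) hcl hz
          rw [hc, ← EReal.coe_sub]
          exact_mod_cast sub_nonpos.mpr hCz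
      · have hσ0 : σ 0 = 0 := by
          apply le_antisymm
          · exact_mod_cast hσ_ub 0 0 fun a _ => by simp
          · have := hσ_lb 0 x0 hx0
            simpa using this
        calc (0 : EReal) = ((inner ℝ z (0 : EuclideanSpace ℝ (Fin d)) : ℝ) : EReal) - σ 0 := by
              rw [hσ0, sub_zero]; simp
          _ ≤ _ := le_iSup (fun y => ((inner ℝ z y : ℝ) : EReal) - σ y)
              (0 : EuclideanSpace ℝ (Fin d))
    · rw [ind, if_neg hz]
      rw [iSup_eq_top]
      intro b hb
      obtain ⟨M, hbM, _⟩ := EReal.lt_iff_exists_real_btwn.mp hb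
      obtain ⟨f, u, hfu, huz⟩ :=
        geometric_hahn_banach_closed_point ((convex_convexHull ℝ A).closure) isClosed_closure hz
      set y : EuclideanSpace ℝ (Fin d) :=
        (InnerProductSpace.toDual ℝ (EuclideanSpace ℝ (Fin d))).symm f with hy
      have hyw : ∀ w : EuclideanSpace ℝ (Fin d), (inner ℝ w y : ℝ) = f w := by
        intro w
        rw [real_inner_comm]
        exact InnerProductSpace.toDual_symm_apply
      have gap : (0 : ℝ) < f z - u := sub_pos.mpr huz
      set t : ℝ := max 1 ((M + 1) / (f z - u)) with ht
      have ht0 : 0 < t := lt_of_lt_of_le one_pos (le_max_left _ _)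
      have htgap : M + 1 ≤ t * (f z - u) := by
        calc M + 1 = (M + 1) / (f z - u) * (f z - u) := (div_mul_cancel₀ _ gap.ne').symm
          _ ≤ t * (f z - u) := mul_le_mul_of_nonneg_right (le_max_right _ _) gap.le
      refine ⟨t • y, ?_⟩
      have hσty : σ (t • y) ≤ ((t * u : ℝ) : EReal) := by
        apply hσ_ub
        intro a ha
        rw [real_inner_smul_right, hyw]
        exact mul_le_mul_of_nonneg_left (hfu _ (hsub ha)).le ht0.le
      have h1 : ((t * f z - t * u : ℝ) : EReal) ≤ ((inner ℝ z (t • y) : ℝ) : EReal) - σ (t • y) := by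
        rw [EReal.coe_sub]
        refine EReal.sub_le_sub ?_ hσty
        rw [real_inner_smul_right, hyw]
      refine lt_of_lt_of_le hbM (le_trans ?_ h1)
      rw [EReal.coe_le_coe_iff]
      nlinarith

theorem stmt {d : ℕ} (N : EuclideanSpace ℝ (Fin d) → ℝ)
    (hN0 : ∀ x : EuclideanSpace ℝ (Fin d), N x = 0 ↔ x = 0)
    (hNh : ∀ (a : ℝ) (x : EuclideanSpace ℝ (Fin d)), N (a • x) = |a| * N x)
    (hNt : ∀ x y : EuclideanSpace ℝ (Fin d), N (x + y) ≤ N x + N y)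
    (X : Set (EuclideanSpace ℝ (Fin d))) :
    IsCapraConvex N X ↔
      ind X = fun x => ind (closure (convexHull ℝ (radProj N '' X))) (radProj N x) := by
  have hkey : capraBiconj N (ind X) =
      fun x => ind (closure (convexHull ℝ (radProj N '' X))) (radProj N x) := by
    funext x
    exact key (radProj N) X (radProj N x)
  rw [IsCapraConvex, hkey]
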